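/- (Approximation guarantee of the LAA algorithm.) Let f be a nonnegative k-submodular function with f(0) = 0 and V ≠ ∅. Let o* be a k-set with c(o*) ≤ B maximizing f among all k-sets of cost at most B, and let (e_m, i_m) ∈ V × {1,…,k} maximize f((e,i)) over all e ∈ V and i ∈ {1,…,k}. Let (e_1,i_1),…,(e_t,i_t) be an LAA run (so that every e_j satisfies c(e_j) ≤ B/2) such that for every e ∈ V with c(e) ≤ B/2 and e ∉ supp(x^t) and every i ∈ {1,…,k}, Δ_{(e,i)}f(x^t) ≤ c(e)·f(x^t)/B. Let T ∈ {0,…,t} be such that c(x_T) ≤ B and c(x_T) ≥ c(x_j) for every j ∈ {0,…,t} with c(x_j) ≤ B, and set x' = x_T. Then max{f((e_m,i_m)), f(x')} ≥ f(o*)/19. -/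
import Mathlib


/-- The meet `x ⊓ y` of two `k`-sets, with components `Xᵢ ∩ Yᵢ`. -/
def sqcap {V : Type*} (x y : V → ℕ) : V → ℕ :=
  fun e => if x e = y e then x e else 0

/-- The join `x ⊔ y` of two `k`-sets, with components
`Zᵢ = (Xᵢ ∪ Yᵢ) \ ⋃_{j ≠ i} (Xⱼ ∪ Yⱼ)`. -/
def sqcup {V : Type*} (x y : V → ℕ) : V → ℕ :=
  fun e =>
    if x e = 0 then y e
    else if y e = 0 then x e
    else if x e = y e then x e else 0

/-- A `k`-set: every element gets a position in `{0, 1, …, k}`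
(`0` meaning unselected). -/
def IsKSet {V : Type*} (k : ℕ) (x : V → ℕ) : Prop := ∀ e, x e ≤ k

/-- `x ⊑ y`: every component of `x` is contained in the corresponding
component of `y`. -/
def KLE {V : Type*} (x y : V → ℕ) : Prop := ∀ e, x e ≠ 0 → y e = x e

/-- The singleton `k`-set `(e, i)`. -/
def singl {V : Type*} [DecidableEq V] (e : V) (i : ℕ) : V → ℕ :=
  fun e' => if e' = e then i else 0

/-- `k`-submodularity: `f x + f y ≥ f (x ⊓ y) + f (x ⊔ y)` for all `k`-sets. -/
def KSubmodular {V : Type*} (k : ℕ) (f : (V → ℕ) → ℝ) : Prop :=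
  ∀ x y : V → ℕ, IsKSet k x → IsKSet k y →
    f x + f y ≥ f (sqcap x y) + f (sqcup x y)

/-- The marginal gain `Δ_{(e,i)} f(x) = f (x ⊔ (e,i)) - f x`. -/
def marg {V : Type*} [DecidableEq V] (f : (V → ℕ) → ℝ) (e : V) (i : ℕ)
    (x : V → ℕ) : ℝ :=
  f (sqcup x (singl e i)) - f x

/-- The cost of a `k`-set: the total cost of its support. -/
noncomputable def cost {V : Type*} [Fintype V] (c : V → ℝ) (x : V → ℕ) : ℝ :=
  ∑ e ∈ Finset.univ.filter (fun e => x e ≠ 0), c e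

section helpers
variable {V : Type*} [DecidableEq V]

lemma sqcup_isKSet {k : ℕ} {x y : V → ℕ} (hx : IsKSet k x) (hy : IsKSet k y) :
    IsKSet k (sqcup x y) := by
  intro v
  unfold sqcup
  split_ifs
  · exact hy v
  · exact hx v
  · exact hx v
  · exact Nat.zero_le k

lemma singl_isKSet {k : ℕ} {e : V} {i : ℕ} (hi : i ≤ k) : IsKSet k (singl e i) := by
  intro v
  unfold singl
  split_ifs
  · exact hi
  · exact Nat.zero_le k

lemma sqcup_right_zero {x y : V → ℕ} {v : V} (h : y v = 0) :
    sqcup x y v = x v := by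
  simp only [sqcup, h]
  split_ifs <;> omega

lemma sqcup_left_zero {x y : V → ℕ} {v : V} (h : x v = 0) :
    sqcup x y v = y v := by
  simp [sqcup, h]

lemma singl_ne {e v : V} {i : ℕ} (hv : v ≠ e) : singl e i v = 0 := by
  simp [singl, hv]

lemma singl_at (e : V) (i : ℕ) : singl e i e = i := by simp [singl]

lemma sqcup_ne {x : V → ℕ} {e v : V} {i : ℕ} (hv : v ≠ e) :
    sqcup x (singl e i) v = x v := sqcup_right_zero (singl_ne hv)

lemma sqcup_at {x : V → ℕ} {e : V} {i : ℕ} (hx : x e = 0) :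
    sqcup x (singl e i) e = i := by
  rw [sqcup_left_zero hx, singl_at]

/-- orthant submodularity -/
lemma orthant {k : ℕ} {f : (V → ℕ) → ℝ} (hsub : KSubmodular k f)
    {x y : V → ℕ} (hx : IsKSet k x) (hy : IsKSet k y) (hxy : KLE x y)
    {e : V} {i : ℕ} (hi1 : 1 ≤ i) (hik : i ≤ k) (hye : y e = 0) :
    f (sqcup y (singl e i)) - f y ≤ f (sqcup x (singl e i)) - f x := by
  have hxe : x e = 0 := by
    by_contra h
    rw [hxy e h] at hye; exact h hye
  have h1 : sqcap (sqcup x (singl e i)) y = x := by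
    funext v
    by_cases hv : v = e
    · subst hv
      simp only [sqcap, sqcup_at hxe, hye, hxe]
      split_ifs <;> omega
    · simp only [sqcap, sqcup_ne hv]
      by_cases hxv : x v = 0
      · simp only [hxv]
        split_ifs <;> omega
      · rw [hxy v hxv]; simp
  have h2 : sqcup (sqcup x (singl e i)) y = sqcup y (singl e i) := by
    funext v
    by_cases hv : v = e
    · subst hv
      rw [sqcup_right_zero hye, sqcup_at hxe, sqcup_at hye]
    · by_cases hxv : x v = 0
      · simp only [sqcup, singl_ne hv, hxv]
        split_ifs <;> omega
      · have hyv := hxy v hxv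
        simp only [sqcup, singl_ne hv, hyv]
        split_ifs <;> omega
  have := hsub (sqcup x (singl e i)) y (sqcup_isKSet hx (singl_isKSet hik)) hy
  rw [h1, h2] at this
  linarith

/-- pairwise monotonicity -/
lemma pairmono {k : ℕ} {f : (V → ℕ) → ℝ} (hsub : KSubmodular k f)
    {y : V → ℕ} (hy : IsKSet k y) {e : V} {i l : ℕ}
    (hi1 : 1 ≤ i) (hik : i ≤ k) (hl1 : 1 ≤ l) (hlk : l ≤ k) (hil : i ≠ l)
    (hye : y e = 0) :
    f y + f y ≤ f (sqcup y (singl e i)) + f (sqcup y (singl e l)) := by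
  have h1 : sqcap (sqcup y (singl e i)) (sqcup y (singl e l)) = y := by
    funext v
    by_cases hv : v = e
    · subst hv
      simp only [sqcap, sqcup, singl_at, hye]
      split_ifs <;> omega
    · simp [sqcap, sqcup, singl_ne hv]
      omega
  have h2 : sqcup (sqcup y (singl e i)) (sqcup y (singl e l)) = y := by
    funext v
    by_cases hv : v = e
    · subst hv
      simp only [sqcup, singl_at, hye]
      split_ifs <;> omega
    · simp only [sqcup, singl_ne hv]
      split_ifs <;> omega
  have := hsub (sqcup y (singl e i)) (sqcup y (singl e l))
    (sqcup_isKSet hy (singl_isKSet hik)) (sqcup_isKSet hy (singl_isKSet hlk))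
  rw [h1, h2] at this
  linarith

/-- subadditivity for disjoint supports -/
lemma subadd {k : ℕ} {f : (V → ℕ) → ℝ} (hsub : KSubmodular k f)
    (hf0 : f (fun _ => 0) = 0)
    {x y : V → ℕ} (hx : IsKSet k x) (hy : IsKSet k y)
    (hdisj : ∀ v, x v = 0 ∨ y v = 0) :
    f (sqcup x y) ≤ f x + f y := by
  have h1 : sqcap x y = (fun _ => 0) := by
    funext v
    rcases hdisj v with h | h <;> simp only [sqcap, h] <;> split_ifs <;> omega
  have := hsub x y hx hy
  rw [h1, hf0] at this
  linarith

end helpers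

set_option maxHeartbeats 1000000 in
/-- approximation guarantee of `LAA`: with `o*` an optimal
feasible `k`-set, `(e_m, i_m)` a best singleton, and `x' = x_T` the
maximal-cost feasible suffix of an LAA run that saturates all light elements,
`max {f((e_m,i_m)), f(x')} ≥ f(o*)/19`. -/
theorem stmt5 {V : Type*} [Fintype V] [DecidableEq V] [Nonempty V]
    (k : ℕ) (hk : 2 ≤ k)
    (f : (V → ℕ) → ℝ)
    (hsub : KSubmodular k f)
    (hnn : ∀ x : V → ℕ, IsKSet k x → 0 ≤ f x)
    (hf0 : f (fun _ => 0) = 0)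
    (c : V → ℝ) (hc : ∀ e, 0 < c e) (B : ℝ) (hB : 0 < B)
    (ostar : V → ℕ) (hostar : IsKSet k ostar) (hostarB : cost c ostar ≤ B)
    (hopt : ∀ y : V → ℕ, IsKSet k y → cost c y ≤ B → f y ≤ f ostar)
    (em : V) (im : ℕ) (him1 : 1 ≤ im) (him2 : im ≤ k)
    (hem : ∀ (e' : V) (i : ℕ), 1 ≤ i → i ≤ k → f (singl e' i) ≤ f (singl em im))
    (t : ℕ) (e : ℕ → V) (pos : ℕ → ℕ)
    (hdist : ∀ j₁ j₂, j₁ < t → j₂ < t → e j₁ = e j₂ → j₁ = j₂)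
    (hposk : ∀ j < t, 1 ≤ pos j ∧ pos j ≤ k)
    (x : ℕ → (V → ℕ))
    (hx0 : x 0 = fun _ => 0)
    (hxsucc : ∀ j < t, x (j + 1) = sqcup (x j) (singl (e j) (pos j)))
    (hbest : ∀ j < t, ∀ l, 1 ≤ l → l ≤ k →
      f (sqcup (x j) (singl (e j) l)) ≤ f (sqcup (x j) (singl (e j) (pos j))))
    (hgain : ∀ j < t, c (e j) * f (x j) / B ≤ marg f (e j) (pos j) (x j))
    (hlight : ∀ j < t, c (e j) ≤ B / 2)
    (hsat : ∀ e', c e' ≤ B / 2 → x t e' = 0 → ∀ i, 1 ≤ i → i ≤ k →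
      marg f e' i (x t) ≤ c e' * f (x t) / B)
    (xs : ℕ → (V → ℕ))
    (hxs0 : xs 0 = fun _ => 0)
    (hxssucc : ∀ j < t, xs (j + 1) = sqcup (xs j) (singl (e (t - 1 - j)) (pos (t - 1 - j))))
    (T : ℕ) (hTt : T ≤ t) (hTB : cost c (xs T) ≤ B)
    (hTmax : ∀ j ≤ t, cost c (xs j) ≤ B → cost c (xs j) ≤ cost c (xs T))
    : f ostar / 19 ≤ max (f (singl em im)) (f (xs T)) := by
  classical
  have hfm0 : 0 ≤ f (singl em im) := hnn _ (singl_isKSet him2)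
  have hfmM : f (singl em im) ≤ max (f (singl em im)) (f (xs T)) := le_max_left _ _
  have hFM' : f (xs T) ≤ max (f (singl em im)) (f (xs T)) := le_max_right _ _
  have hM0 : 0 ≤ max (f (singl em im)) (f (xs T)) := le_trans hfm0 hfmM
  -- explicit description of the greedy run
  have hxjE : ∀ j, j ≤ t → (∀ i, i < j → x j (e i) = pos i) ∧
      (∀ v, (∀ i, i < j → e i ≠ v) → x j v = 0) := by
    intro j
    induction j with
    | zero =>
      intro _
      refine ⟨fun i hi => absurd hi (by omega), fun v _ => by rw [hx0]⟩
    | succ n ih =>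
      intro hn1
      have hnt : n < t := hn1
      obtain ⟨ih1, ih2⟩ := ih (le_of_lt hnt)
      have hxn_ej : x n (e n) = 0 := by
        apply ih2
        intro i hi hEq
        have := hdist i n (lt_trans hi hnt) hnt hEq
        omega
      constructor
      · intro i hi
        rcases Nat.lt_succ_iff_lt_or_eq.mp hi with h | h
        · have hne : e i ≠ e n := fun hEq => by
            have := hdist i n (lt_trans h hnt) hnt hEq; omega
          rw [hxsucc n hnt, sqcup_ne hne, ih1 i h]
        · subst h
          rw [hxsucc i hnt, sqcup_at hxn_ej]
      · intro v hv
        rw [hxsucc n hnt, sqcup_ne (Ne.symm (hv n (Nat.lt_succ_self n)))]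
        exact ih2 v (fun i hi => hv i (lt_trans hi (Nat.lt_succ_self n)))
  -- explicit description of the suffixes
  have hxsE : ∀ j, j ≤ t → (∀ i, t - j ≤ i → i < t → xs j (e i) = pos i) ∧
      (∀ v, (∀ i, t - j ≤ i → i < t → e i ≠ v) → xs j v = 0) := by
    intro j
    induction j with
    | zero =>
      intro _
      refine ⟨fun i h1 h2 => absurd h1 (by omega), fun v _ => by rw [hxs0]⟩
    | succ n ih =>
      intro hn1
      have hnt : n < t := hn1
      obtain ⟨ih1, ih2⟩ := ih (le_of_lt hnt)
      have hmlt : t - 1 - n < t := by omega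
      have hxs_m : xs n (e (t - 1 - n)) = 0 := by
        apply ih2
        intro i h1 h2 hEq
        have := hdist i (t - 1 - n) h2 hmlt hEq
        omega
      constructor
      · intro i h1 h2
        by_cases him : i = t - 1 - n
        · subst him
          rw [hxssucc n hnt, sqcup_at hxs_m]
        · have hne : e i ≠ e (t - 1 - n) := fun hEq => him (hdist i _ h2 hmlt hEq)
          rw [hxssucc n hnt, sqcup_ne hne]
          exact ih1 i (by omega) h2
      · intro v hv
        rw [hxssucc n hnt, sqcup_ne (Ne.symm (hv (t - 1 - n) (by omega) hmlt))]
        exact ih2 v (fun i h1 h2 => hv i (by omega) h2)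
  -- k-set properties
  have hxK : ∀ j, j ≤ t → IsKSet k (x j) := by
    intro j
    induction j with
    | zero => intro _; rw [hx0]; intro v; exact Nat.zero_le k
    | succ n ih =>
      intro h
      rw [hxsucc n h]
      exact sqcup_isKSet (ih (by omega)) (singl_isKSet (hposk n h).2)
  have hxsK : ∀ j, j ≤ t → IsKSet k (xs j) := by
    intro j
    induction j with
    | zero => intro _; rw [hxs0]; intro v; exact Nat.zero_le k
    | succ n ih =>
      intro h
      rw [hxssucc n h]
      exact sqcup_isKSet (ih (by omega)) (singl_isKSet (hposk _ (by omega)).2)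
  have hxnn : ∀ j, j ≤ t → 0 ≤ f (x j) := fun j hj => hnn _ (hxK j hj)
  -- marginal gains
  have hdelta : ∀ j, j < t → c (e j) * f (x j) / B ≤ f (x (j+1)) - f (x j) := by
    intro j hj
    have h := hgain j hj
    unfold marg at h
    rw [← hxsucc j hj] at h
    exact h
  have hdnn : ∀ j, j < t → 0 ≤ f (x (j+1)) - f (x j) := by
    intro j hj
    refine le_trans ?_ (hdelta j hj)
    exact div_nonneg (mul_nonneg (hc _).le (hxnn j hj.le)) hB.le
  have hdelta' : ∀ j, j < t → c (e j) * f (x j) ≤ (f (x (j+1)) - f (x j)) * B := by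
    intro j hj
    have h := hdelta j hj
    rwa [div_le_iff₀ hB] at h
  -- cost formulas
  have hcostxs : ∀ j, j ≤ t → cost c (xs j) = ∑ i ∈ Finset.Ico (t-j) t, c (e i) := by
    intro j hj
    have himg : Finset.univ.filter (fun v => xs j v ≠ 0) = (Finset.Ico (t-j) t).image e := by
      ext v
      simp only [Finset.mem_filter, Finset.mem_univ, true_and, Finset.mem_image, Finset.mem_Ico]
      constructor
      · intro hv
        by_contra hno
        push_neg at hno
        exact hv ((hxsE j hj).2 v (fun i h1 h2 hEq => (hno i ⟨h1, h2⟩) hEq))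
      · rintro ⟨i, ⟨h1, h2⟩, rfl⟩
        rw [(hxsE j hj).1 i h1 h2]
        have := (hposk i h2).1; omega
    have hinj : ∀ i₁ ∈ Finset.Ico (t-j) t, ∀ i₂ ∈ Finset.Ico (t-j) t, e i₁ = e i₂ → i₁ = i₂ := by
      intro i hi j' hj' hij
      exact hdist i j' (Finset.mem_Ico.mp hi).2 (Finset.mem_Ico.mp hj').2 hij
    rw [cost, himg, Finset.sum_image hinj]
  have hxst : xs t = x t := by
    funext v
    by_cases hv : ∃ i, i < t ∧ e i = v
    · obtain ⟨i, hi, rfl⟩ := hv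
      rw [(hxsE t le_rfl).1 i (by omega) hi, (hxjE t le_rfl).1 i hi]
    · push_neg at hv
      rw [(hxsE t le_rfl).2 v (fun i _ h2 => hv i h2), (hxjE t le_rfl).2 v (fun i hi => hv i hi)]
  -- decomposition of x t into prefix and suffix
  have hdisj : ∀ v, x (t-T) v = 0 ∨ xs T v = 0 := by
    intro v
    by_cases hv : ∃ i, i < t ∧ e i = v
    · obtain ⟨i, hi, rfl⟩ := hv
      by_cases hiT : i < t - T
      · right
        exact (hxsE T hTt).2 _ (fun i' ha hb hEq => by
          have := hdist i' i hb hi hEq; omega)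
      · left
        exact (hxjE (t-T) (by omega)).2 _ (fun i' hi' hEq => by
          have := hdist i' i (by omega) hi hEq; omega)
    · push_neg at hv
      left
      exact (hxjE (t-T) (by omega)).2 v (fun i hi => hv i (by omega))
  have hdecomp : x t = sqcup (x (t-T)) (xs T) := by
    funext v
    by_cases hv : ∃ i, i < t ∧ e i = v
    · obtain ⟨i, hi, rfl⟩ := hv
      by_cases hiT : i < t - T
      · have h1 : x (t-T) (e i) = pos i := (hxjE (t-T) (by omega)).1 i hiT
        have h2 : xs T (e i) = 0 := (hxsE T hTt).2 _ (fun i' ha hb hEq => by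
          have := hdist i' i hb hi hEq; omega)
        rw [sqcup_right_zero h2, h1, (hxjE t le_rfl).1 i hi]
      · have h1 : x (t-T) (e i) = 0 := (hxjE (t-T) (by omega)).2 _ (fun i' hi' hEq => by
          have := hdist i' i (by omega) hi hEq; omega)
        have h2 : xs T (e i) = pos i := (hxsE T hTt).1 i (by omega) hi
        rw [sqcup_left_zero h1, h2, (hxjE t le_rfl).1 i hi]
    · push_neg at hv
      have h1 : x (t-T) v = 0 := (hxjE (t-T) (by omega)).2 v (fun i hi => hv i (by omega))
      have h2 : xs T v = 0 := (hxsE T hTt).2 v (fun i _ hb => hv i hb)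
      rw [sqcup_left_zero h1, h2, (hxjE t le_rfl).2 v (fun i hi => hv i hi)]
  have hsplit : f (x t) ≤ f (x (t-T)) + f (xs T) := by
    rw [hdecomp]
    exact subadd hsub hf0 (hxK (t-T) (by omega)) (hxsK T hTt) hdisj
  -- growth along the run
  have hgrow : f (x (t-T)) * (B + cost c (xs T)) ≤ f (x t) * B := by
    rw [hcostxs T hTt]
    have main : ∀ j, t - T ≤ j → j ≤ t →
        f (x (t-T)) * (B + ∑ i ∈ Finset.Ico (t-T) j, c (e i)) ≤ f (x j) * B := by
      intro j
      induction j with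
      | zero =>
        intro h1 _
        have h0 : t - T = 0 := by omega
        rw [h0]
        simp
      | succ n ih =>
        intro h1 h2
        by_cases hn : t - T ≤ n
        · have hnt : n < t := h2
          have ihn := ih hn (by omega)
          have hstep := hdelta' n hnt
          rw [Finset.sum_Ico_succ_top hn]
          have hf0n : 0 ≤ f (x (t-T)) := hxnn _ (by omega)
          have hfn : 0 ≤ f (x n) := hxnn _ hnt.le
          have hc1 : 0 ≤ ∑ i ∈ Finset.Ico (t-T) n, c (e i) :=
            Finset.sum_nonneg (fun i _ => (hc _).le)
          have hc2 : 0 < c (e n) := hc _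
          have hmono1 : f (x (t-T)) ≤ f (x n) := by nlinarith
          nlinarith [mul_nonneg (sub_nonneg.mpr hmono1) hc2.le]
        · have h0 : t - T = n + 1 := by omega
          rw [h0]
          simp
    have h := main t (by omega) le_rfl
    exact h
  -- case analysis: either the chosen suffix is expensive, or it is everything
  have hcost_step : ∀ j, j < t → cost c (xs (j+1)) = cost c (xs j) + c (e (t-1-j)) := by
    intro j hj
    rw [hcostxs (j+1) hj, hcostxs j hj.le,
      Finset.sum_eq_sum_Ico_succ_bot (show t-(j+1) < t by omega),
      show t-(j+1)+1 = t-j from by omega, show t-(j+1) = t-1-j from by omega]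
    ring
  have hcases : B/2 < cost c (xs T) ∨ xs T = x t := by
    by_cases hct : cost c (x t) ≤ B
    · right
      rcases Nat.lt_or_ge T t with hTlt | hTe
      · exfalso
        have h1 : cost c (xs t) ≤ cost c (xs T) := hTmax t le_rfl (by rw [hxst]; exact hct)
        have h2 : cost c (xs T) < cost c (xs t) := by
          rw [hcostxs T hTt, hcostxs t le_rfl]
          have hss : Finset.Ico (t-T) t ⊆ Finset.Ico (t-t) t :=
            Finset.Ico_subset_Ico (by omega) le_rfl
          refine Finset.sum_lt_sum_of_subset hss (i := 0) ?_ ?_ (hc _) ?_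
          · rw [Finset.mem_Ico]; omega
          · rw [Finset.mem_Ico]; omega
          · intro j _ _; exact (hc _).le
        linarith
      · have hTeq : T = t := le_antisymm hTt hTe
        rw [hTeq, hxst]
    · left
      push_neg at hct
      have hPt : B/2 < cost c (xs t) := by rw [hxst]; linarith
      have main : ∀ j, j ≤ t → cost c (xs j) ≤ B/2 ∨
          ∃ j', j' ≤ j ∧ B/2 < cost c (xs j') ∧ cost c (xs j') ≤ B := by
        intro j
        induction j with
        | zero =>
          intro _
          left
          rw [hcostxs 0 (by omega)]
          simp
          linarith
        | succ n ih =>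
          intro h
          rcases ih (by omega) with hle | ⟨j', h1, h2, h3⟩
          · have hstep := hcost_step n h
            have hlightn : c (e (t-1-n)) ≤ B/2 := hlight _ (by omega)
            by_cases hc3 : cost c (xs (n+1)) ≤ B/2
            · left; exact hc3
            · right
              push_neg at hc3
              exact ⟨n+1, le_rfl, hc3, by linarith⟩
          · right; exact ⟨j', by omega, h2, h3⟩
      rcases main t le_rfl with hle | ⟨j', h1, h2, h3⟩
      · linarith
      · have := hTmax j' h1 h3
        linarith
  -- f (x t) ≤ 3 * M
  have hF3 : f (x t) ≤ 3 * max (f (singl em im)) (f (xs T)) := by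
    rcases hcases with hbig | heq
    · have hf0n : 0 ≤ f (x (t-T)) := hxnn _ (by omega)
      have hFnn : 0 ≤ f (x t) := hxnn t le_rfl
      nlinarith
    · rw [← heq]
      linarith
  -- the heavy/light decomposition of ostar
  set o1 : V → ℕ := fun v => if c v ≤ B/2 then ostar v else 0 with ho1
  set oh : V → ℕ := fun v => if c v ≤ B/2 then 0 else ostar v with hoh
  have ho1K : IsKSet k o1 := by
    intro v
    simp only [ho1]
    split_ifs
    · exact hostar v
    · exact Nat.zero_le k
  have hsplit_o : f ostar ≤ f o1 + f oh := by
    have heq : ostar = sqcup o1 oh := by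
      funext v
      simp only [ho1, hoh, sqcup]
      split_ifs <;> omega
    have hohK : IsKSet k oh := by
      intro v
      simp only [hoh]
      split_ifs
      · exact Nat.zero_le k
      · exact hostar v
    have hd : ∀ v, o1 v = 0 ∨ oh v = 0 := by
      intro v
      simp only [ho1, hoh]
      split_ifs
      · right; rfl
      · left; rfl
    calc f ostar = f (sqcup o1 oh) := by rw [← heq]
    _ ≤ f o1 + f oh := subadd hsub hf0 ho1K hohK hd
  have hohfm : f oh ≤ f (singl em im) := by
    by_cases hex : ∃ v, oh v ≠ 0
    · obtain ⟨v, hv0⟩ := hex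
      have hcv : ¬ c v ≤ B/2 := by
        intro h
        apply hv0
        simp only [hoh, if_pos h]
      have hov : ostar v ≠ 0 := by
        intro h
        apply hv0
        simp only [hoh, if_neg hcv, h]
      have hohs : oh = singl v (ostar v) := by
        funext w
        by_cases hw : w = v
        · subst hw
          simp only [hoh, if_neg hcv, singl_at]
        · rw [singl_ne hw]
          simp only [hoh]
          split_ifs with hcw
          · rfl
          · -- two heavy elements would exceed the budget
            by_contra how
            have hvw : v ≠ w := fun h => hw h.symm
            have hle : c v + c w ≤ cost c ostar := by
              rw [cost]
              have hss : ({v, w} : Finset V) ⊆ Finset.univ.filter (fun u => ostar u ≠ 0) := by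
                intro u hu
                simp only [Finset.mem_insert, Finset.mem_singleton] at hu
                simp only [Finset.mem_filter, Finset.mem_univ, true_and]
                rcases hu with rfl | rfl
                · exact hov
                · exact how
              calc c v + c w = ∑ u ∈ ({v, w} : Finset V), c u :=
                    (Finset.sum_pair hvw).symm
              _ ≤ _ := Finset.sum_le_sum_of_subset_of_nonneg hss (fun u _ _ => (hc u).le)
            push_neg at hcv hcw
            linarith
      rw [hohs]
      exact hem v (ostar v) (Nat.one_le_iff_ne_zero.mpr hov) (hostar v)
    · push_neg at hex
      have : oh = (fun _ => 0) := funext fun v => hex v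
      rw [this, hf0]
      exact hfm0
  -- the overwrite chain
  set ow : ℕ → (V → ℕ) := fun j v => if x j v = 0 then o1 v else x j v with how
  have howK : ∀ j, j ≤ t → IsKSet k (ow j) := by
    intro j hj v
    simp only [how]
    split_ifs
    · exact ho1K v
    · exact hxK j hj v
  have hchain : ∀ j, j < t → f (ow j) ≤ f (ow (j+1)) + 2*(f (x (j+1)) - f (x j)) := by
    intro j hj
    obtain ⟨hp1, hp2⟩ := hposk j hj
    have hxej : x j (e j) = 0 := (hxjE j hj.le).2 _ (fun i hi hEq => by
      have := hdist i j (by omega) hj hEq; omega)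
    have hxj1ej : x (j+1) (e j) = pos j := (hxjE (j+1) hj).1 j (Nat.lt_succ_self j)
    have hxsame : ∀ v, v ≠ e j → x (j+1) v = x j v := fun v hv => by
      rw [hxsucc j hj]; exact sqcup_ne hv
    set y : V → ℕ := fun v => if v = e j then 0 else (if x j v = 0 then o1 v else x j v)
      with hy
    have hyK : IsKSet k y := by
      intro v
      simp only [hy]
      split_ifs
      · exact Nat.zero_le k
      · exact ho1K v
      · exact hxK j hj.le v
    have hyej : y (e j) = 0 := by simp [hy]
    have hKLE : KLE (x j) y := by
      intro v hv0
      have hvne : v ≠ e j := fun h => hv0 (h ▸ hxej)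
      simp only [hy, if_neg hvne, if_neg hv0]
    have hbound : ∀ l, 1 ≤ l → l ≤ k →
        f (sqcup y (singl (e j) l)) - f y ≤ f (x (j+1)) - f (x j) := by
      intro l h1 h2
      have horth := orthant hsub (hxK j hj.le) hyK hKLE h1 h2 hyej
      have hb := hbest j hj l h1 h2
      rw [← hxsucc j hj] at hb
      linarith [horth, hb]
    have howj1 : ow (j+1) = sqcup y (singl (e j) (pos j)) := by
      funext v
      by_cases hv : v = e j
      · subst hv
        rw [sqcup_at hyej]
        simp only [how, hxj1ej]
        rw [if_neg (by omega)]
      · rw [sqcup_ne hv]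
        simp only [how, hy, hxsame v hv, if_neg hv]
    obtain ⟨l, hl1, hl2, hl3⟩ : ∃ l, 1 ≤ l ∧ l ≤ k ∧ l ≠ pos j := by
      by_cases h : pos j = 1
      · exact ⟨2, by omega, hk, by omega⟩
      · exact ⟨1, le_rfl, by omega, by omega⟩
    have hpm := pairmono hsub hyK hp1 hp2 hl1 hl2 (Ne.symm hl3) hyej
    have hstep1 : f y ≤ f (ow (j+1)) + (f (x (j+1)) - f (x j)) := by
      have hb := hbound l hl1 hl2
      rw [howj1]
      linarith
    have hstep2 : f (ow j) ≤ f y + (f (x (j+1)) - f (x j)) := by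
      by_cases hq : o1 (e j) = 0
      · have howy : ow j = y := by
          funext v
          by_cases hv : v = e j
          · subst hv
            simp [how, hy, hxej, hq]
          · simp only [how, hy, if_neg hv]
        rw [howy]
        linarith [hdnn j hj]
      · have hq1 : 1 ≤ o1 (e j) := Nat.one_le_iff_ne_zero.mpr hq
        have hq2 : o1 (e j) ≤ k := ho1K _
        have howq : ow j = sqcup y (singl (e j) (o1 (e j))) := by
          funext v
          by_cases hv : v = e j
          · subst hv
            rw [sqcup_at hyej]
            simp [how, hxej]
          · rw [sqcup_ne hv]
            simp only [how, hy, if_neg hv]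
        rw [howq]
        linarith [hbound _ hq1 hq2]
    linarith
  have htel : ∀ j, j ≤ t → f (ow 0) ≤ f (ow j) + 2*(f (x j) - f (x 0)) := by
    intro j
    induction j with
    | zero => intro _; linarith
    | succ n ih =>
      intro h
      have h1 := hchain n h
      have h2 := ih (by omega)
      linarith
  have how0 : ow 0 = o1 := by
    funext v
    simp [how, hx0]
  -- adding the light outside elements to x t
  set Z : Finset V := Finset.univ.filter (fun v => x t v = 0 ∧ o1 v ≠ 0) with hZ
  have hins : ∀ s : Finset V, s ⊆ Z →
      f (fun v => if x t v = 0 then (if v ∈ s then o1 v else 0) else x t v) ≤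
        f (x t) + (∑ v ∈ s, c v) * f (x t) / B := by
    intro s
    induction s using Finset.induction_on with
    | empty =>
      intro _
      have : (fun v => if x t v = 0 then (if v ∈ (∅ : Finset V) then o1 v else 0) else x t v)
          = x t := by
        funext v
        by_cases h : x t v = 0 <;> simp [h]
      rw [this]
      simp
    | @insert a s ha ih =>
      intro hsub'
      have haZ : a ∈ Z := hsub' (Finset.mem_insert_self a s)
      have hsZ : s ⊆ Z := fun u hu => hsub' (Finset.mem_insert_of_mem hu)
      rw [hZ, Finset.mem_filter] at haZ
      obtain ⟨-, hxa, ho1a⟩ := haZ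
      have hca : c a ≤ B/2 := by
        by_contra hcb
        apply ho1a
        simp only [ho1, if_neg hcb]
      have hq1 : 1 ≤ o1 a := Nat.one_le_iff_ne_zero.mpr ho1a
      have hq2 : o1 a ≤ k := ho1K a
      set g : V → ℕ := fun v => if x t v = 0 then (if v ∈ s then o1 v else 0) else x t v
        with hg
      have hgK : IsKSet k g := by
        intro v
        simp only [hg]
        split_ifs
        · exact ho1K v
        · exact Nat.zero_le k
        · exact hxK t le_rfl v
      have hga : g a = 0 := by simp [hg, hxa, ha]
      have hKLEg : KLE (x t) g := by
        intro v hv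
        simp only [hg, if_neg hv]
      have hEq : (fun v => if x t v = 0 then (if v ∈ insert a s then o1 v else 0) else x t v)
          = sqcup g (singl a (o1 a)) := by
        funext v
        by_cases hv : v = a
        · subst hv
          rw [sqcup_at hga]
          simp [hxa]
        · rw [sqcup_ne hv]
          simp only [hg, Finset.mem_insert]
          have : (v = a ∨ v ∈ s) ↔ v ∈ s := by
            constructor
            · rintro (rfl | h)
              · exact absurd rfl hv
              · exact h
            · exact Or.inr
          rw [if_congr (Iff.rfl) rfl rfl]
          congr 1
          · rw [if_congr this rfl rfl]
      have horth := orthant hsub (hxK t le_rfl) hgK hKLEg hq1 hq2 hga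
      have hs := hsat a hca hxa (o1 a) hq1 hq2
      unfold marg at hs
      have hih := ih hsZ
      have hFnn := hxnn t le_rfl
      rw [hEq, Finset.sum_insert ha]
      have hexp : (c a + ∑ v ∈ s, c v) * f (x t)/B
          = c a * f (x t)/B + (∑ v ∈ s, c v)*f (x t)/B := by ring
      rw [hexp]
      linarith
  have howt_bound : f (ow t) ≤ f (x t) + (∑ v ∈ Z, c v) * f (x t) / B := by
    have h := hins Z (subset_refl Z)
    have heqZ : (fun v => if x t v = 0 then (if v ∈ Z then o1 v else 0) else x t v) = ow t := by
      funext v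
      simp only [how]
      by_cases hxv : x t v = 0
      · simp only [hxv, if_pos rfl]
        by_cases ho : o1 v = 0
        · simp [hZ, hxv, ho]
        · simp [hZ, hxv, ho]
      · simp [hxv]
    rwa [heqZ] at h
  have hZB : ∑ v ∈ Z, c v ≤ B := by
    have hss : Z ⊆ Finset.univ.filter (fun u => ostar u ≠ 0) := by
      intro u hu
      rw [hZ, Finset.mem_filter] at hu
      simp only [Finset.mem_filter, Finset.mem_univ, true_and]
      intro h0
      apply hu.2.2
      simp only [ho1, h0]
      split_ifs <;> rfl
    calc ∑ v ∈ Z, c v ≤ ∑ v ∈ Finset.univ.filter (fun u => ostar u ≠ 0), c v :=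
          Finset.sum_le_sum_of_subset_of_nonneg hss (fun u _ _ => (hc u).le)
    _ = cost c ostar := by rw [cost]
    _ ≤ B := hostarB
  have howtF : f (ow t) ≤ 2 * f (x t) := by
    have hFnn := hxnn t le_rfl
    have hZnn : 0 ≤ ∑ v ∈ Z, c v := Finset.sum_nonneg (fun v _ => (hc v).le)
    have h1 : (∑ v ∈ Z, c v) * f (x t) / B ≤ f (x t) := by
      rw [div_le_iff₀ hB]
      nlinarith
    linarith
  -- put everything together
  have hU := htel t le_rfl
  rw [hx0, hf0, how0] at hU
  have hfinal : f ostar ≤ 13 * max (f (singl em im)) (f (xs T)) := by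
    have hFnn := hxnn t le_rfl
    calc f ostar ≤ f o1 + f oh := hsplit_o
    _ ≤ (f (ow t) + 2*(f (x t) - 0)) + f (singl em im) := by linarith
    _ ≤ (2 * f (x t) + 2 * f (x t)) + f (singl em im) := by linarith
    _ ≤ 13 * max (f (singl em im)) (f (xs T)) := by linarith
  linarith
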